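/- Termination of epsilon-transition sequences: suppose that for every subexpression of e of the form f*, the body f does not match the empty string. Then there is no infinite sequence of consecutive non-consuming PWπ transitions; i.e., the restriction of the PWπ transition relation to transitions that do not consume an input symbol is well-founded. -/
import Mathlib


/-!
Formalization of backtracking regular-expression matching (PWπ / PWFπ / HFπ machines).

Nodes of the syntax tree of a fixed regular expression `e` are represented as
positions (lists of booleans: `false` = left/only child, `true` = right child).
`e.sub p` is the subexpression at position `p` (`none` if the position is invalid),
and `e.kont p` is the continuation pointer `k(p)` (`none` represents `⊥`).
-/

inductive RE (σ : Type) : Type where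
  | sym : σ → RE σ
  | eps : RE σ
  | cat : RE σ → RE σ → RE σ
  | alt : RE σ → RE σ → RE σ
  | star : RE σ → RE σ

/-- A position (node) in the syntax tree. The root is `[]`. -/
abbrev RPos : Type := List Bool

/-- A node pointer: either a position or `⊥` (represented by `none`). -/
abbrev RNode : Type := Option RPos

/-- A configuration of the PWπ machine: a pointer and the remaining input. -/
abbrev RConf (σ : Type) : Type := RNode × List σ

namespace RE

variable {σ : Type}

/-- The subexpression `π(p)` of `e` at position `p` (`none` if `p` is invalid). -/
def sub : RE σ → RPos → Option (RE σ)
  | f, [] => some f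
  | cat f1 f2, b :: p => sub (if b then f2 else f1) p
  | alt f1 f2, b :: p => sub (if b then f2 else f1) p
  | star f1, false :: p => sub f1 p
  | _, _ => none

/-- `kontAux f cur rest kc` computes the continuation of the node at position
`cur ++ rest`, where `f` is the subexpression at `cur` and `kc` is the
continuation of the node at `cur`. -/
def kontAux : RE σ → RPos → RPos → RNode → RNode
  | _, _, [], kc => kc
  | cat f1 _, cur, false :: rest, _ => kontAux f1 (cur ++ [false]) rest (some (cur ++ [true]))
  | cat _ f2, cur, true :: rest, kc => kontAux f2 (cur ++ [true]) rest kc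
  | alt f1 _, cur, false :: rest, kc => kontAux f1 (cur ++ [false]) rest kc
  | alt _ f2, cur, true :: rest, kc => kontAux f2 (cur ++ [true]) rest kc
  | star f1, cur, false :: rest, _ => kontAux f1 (cur ++ [false]) rest (some cur)
  | _, _, _, _ => none

/-- The continuation pointer `k(p)`; `k(p_root) = ⊥ = none`. -/
def kont (e : RE σ) (p : RPos) : RNode := kontAux e [] p none

/-- `π` extended to node pointers. -/
def subN (e : RE σ) : RNode → Option (RE σ)
  | none => none
  | some p => e.sub p

/-- `k` extended to node pointers. -/
def kontN (e : RE σ) : RNode → RNode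
  | none => none
  | some p => e.kont p

/-- The language of a regular expression. -/
def lang : RE σ → Language σ
  | sym a => {[a]}
  | eps => 1
  | cat f1 f2 => lang f1 * lang f2
  | alt f1 f2 => lang f1 + lang f2
  | star f => KStar.kstar (lang f)

/-- The transition relation of the PWπ machine. -/
inductive PWStep (e : RE σ) : RConf σ → RConf σ → Prop
  | altL {p : RPos} {f1 f2 : RE σ} {w : List σ} :
      e.sub p = some (alt f1 f2) → PWStep e (some p, w) (some (p ++ [false]), w)
  | altR {p : RPos} {f1 f2 : RE σ} {w : List σ} :
      e.sub p = some (alt f1 f2) → PWStep e (some p, w) (some (p ++ [true]), w)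
  | starK {p : RPos} {f1 : RE σ} {w : List σ} :
      e.sub p = some (star f1) → PWStep e (some p, w) (e.kont p, w)
  | starI {p : RPos} {f1 : RE σ} {w : List σ} :
      e.sub p = some (star f1) → PWStep e (some p, w) (some (p ++ [false]), w)
  | catL {p : RPos} {f1 f2 : RE σ} {w : List σ} :
      e.sub p = some (cat f1 f2) → PWStep e (some p, w) (some (p ++ [false]), w)
  | symC {p : RPos} {a : σ} {w : List σ} :
      e.sub p = some (sym a) → PWStep e (some p, a :: w) (e.kont p, w)
  | epsC {p : RPos} {w : List σ} :
      e.sub p = some eps → PWStep e (some p, w) (e.kont p, w)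

/-- `IsPath e t p w q` : `t : p ⇒[w] q` is a path of pointers labelled by the string `w`. -/
inductive IsPath (e : RE σ) : List RNode → RNode → List σ → RNode → Prop
  | single (p : RNode) : IsPath e [p] p [] p
  | snoc {t : List RNode} {p q q' : RNode} {w w' w1 : List σ} :
      IsPath e t p w q → PWStep e (q, w' ++ w1) (q', w1) →
      IsPath e (t ++ [q']) p (w ++ w') q'

/-- The transition relation of the PWFπ (backtracking) machine on stacks of
PWπ configurations. -/
inductive PWFStep (e : RE σ) : List (RConf σ) → List (RConf σ) → Prop
  | one {c c' : RConf σ} {f : List (RConf σ)} :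
      PWStep e c c' → (∀ d, PWStep e c d → d = c') → PWFStep e (c :: f) (c' :: f)
  | two {c c1 c2 : RConf σ} {f : List (RConf σ)} :
      PWStep e c c1 → PWStep e c c2 → c1 ≠ c2 →
      (∀ d, PWStep e c d → d = c1 ∨ d = c2) → PWFStep e (c :: f) (c1 :: c2 :: f)
  | fail {c : RConf σ} {f : List (RConf σ)} :
      (∀ d, ¬ PWStep e c d) → PWFStep e (c :: f) f

end RE

/-- `NSteps R n a b` : there is a sequence of exactly `n` `R`-transitions from `a` to `b`. -/
def NSteps {α : Type*} (R : α → α → Prop) : ℕ → α → α → Prop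
  | 0, a, b => a = b
  | n + 1, a, b => ∃ c, R a c ∧ NSteps R n c b

namespace RE

variable {σ : Type}

/-- A non-consuming PWπ transition, viewed as a relation on pointers. -/
def EpsStep (e : RE σ) (p q : RNode) : Prop := PWStep e (p, ([] : List σ)) (q, [])

/-- `L` is (a list representing) `evolve(p)`: the nodes reachable from `p` by
non-consuming transitions whose subexpression is an input symbol. -/
def IsEvolve (e : RE σ) (p : RNode) (L : List RNode) : Prop :=
  ∀ q, q ∈ L ↔ (Relation.ReflTransGen (EpsStep e) p q ∧ ∃ a, e.subN q = some (sym a))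

/-- `DRel e a P r` : `r` is a result of the derivative computation `D_a(P)`. -/
inductive DRel (e : RE σ) (a : σ) : List RNode → List RNode → Prop
  | nil : DRel e a [] []
  | symNe {h : RNode} {t r : List RNode} {b : σ} :
      e.subN h = some (sym b) → b ≠ a → DRel e a t r → DRel e a (h :: t) r
  | symEq {h : RNode} {t r : List RNode} :
      e.subN h = some (sym a) → DRel e a t r → DRel e a (h :: t) (e.kontN h :: r)
  | ev {h : RNode} {t r L : List RNode} :
      (∀ b, e.subN h ≠ some (sym b)) → IsEvolve e h L →
      DRel e a (L ++ t) r → DRel e a (h :: t) r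

/-- The transition relation on wP frames: `(w, P) → (w·a, D_a(P))` when `D_a(P) ≠ []`. -/
inductive WPStep (e : RE σ) : List σ × List RNode → List σ × List RNode → Prop
  | mk {w : List σ} {P : List RNode} {a : σ} {r : List RNode} :
      DRel e a P r → r ≠ [] → WPStep e (w, P) (w ++ [a], r)

end RE

/-- A configuration of the HFπ machine: a history (set of node-sets) and a
queue of wP frames. -/
abbrev HFConf (σ : Type) : Type := Finset (Finset RNode) × List (List σ × List RNode)

namespace RE

variable {σ : Type}

/-- The transition relation of the HFπ machine: the head frame `(w, P)` is replaced by
exactly those of its wP-successors (one for each viable symbol) whose node-sets are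
not in the history `H`, and their node-sets are added to `H`. -/
inductive HFStep (e : RE σ) : HFConf σ → HFConf σ → Prop
  | mk {H : Finset (Finset RNode)} {w : List σ} {P : List RNode}
      {f : List (List σ × List RNode)} (l : List (σ × List RNode)) :
      (l.map Prod.fst).Nodup →
      (∀ x ∈ l, DRel e x.1 P x.2 ∧ x.2 ≠ [] ∧ x.2.toFinset ∉ H) →
      (∀ (a : σ) (r : List RNode), DRel e a P r → r ≠ [] → r.toFinset ∉ H →
        ∃ r', (a, r') ∈ l ∧ r'.toFinset = r.toFinset) →
      HFStep e (H, (w, P) :: f)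
        (H ∪ (l.map (fun x => x.2.toFinset)).toFinset,
         f ++ l.map (fun x => (w ++ [x.1], x.2)))

/-- Every starred subexpression of `e` has a body that does not match the empty string. -/
def NonNullableStars (e : RE σ) : Prop :=
  ∀ (p : RPos) (f : RE σ), e.sub p = some (star f) → ([] : List σ) ∉ lang f

end RE
namespace RE
variable {σ : Type}

/-- Size of a regular expression (always positive). -/
def sz : RE σ → ℕ
  | sym _ => 1
  | eps => 1
  | cat f1 f2 => sz f1 + sz f2 + 1
  | alt f1 f2 => sz f1 + sz f2 + 1
  | star f1 => sz f1 + 1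

lemma sz_pos (f : RE σ) : 1 ≤ sz f := by
  cases f <;> simp [sz]

/-- Weight of the node at position `p`, given outer continuation weight `c`. -/
def MM : RE σ → RPos → ℕ → ℕ
  | f, [], c => sz f + c
  | cat f1 f2, false :: r, c => MM f1 r (sz f2 + c)
  | cat _ f2, true :: r, c => MM f2 r c
  | alt f1 _, false :: r, c => MM f1 r c
  | alt _ f2, true :: r, c => MM f2 r c
  | star f1, false :: r, c => MM f1 r (sz f1 + 1 + c)
  | _, _, _ => 0

def mu (e : RE σ) : RNode → ℕ
  | none => 0
  | some p => MM e p 0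

lemma sub_append : ∀ (p : RPos) (e f : RE σ), sub e p = some f →
    ∀ s, sub e (p ++ s) = sub f s := by
  intro p
  induction p with
  | nil =>
    intro e f h s
    simp [sub] at h
    subst h
    rfl
  | cons b p ih =>
    intro e f h s
    cases e <;> cases b <;> simp [sub] at h ⊢ <;> exact ih _ _ h s

lemma MM_lin : ∀ (p : RPos) (f g : RE σ), sub f p = some g →
    ∀ c, MM f p c = MM f p 0 + c := by
  intro p
  induction p with
  | nil => intro f g h c; simp [MM]
  | cons b p ih =>
    intro f g h c
    cases f <;> cases b <;> simp [sub] at h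
    case cat.false f1 f2 =>
      simp only [MM]; rw [ih _ _ h (sz f2 + c), ih _ _ h (sz f2 + 0)]; omega
    case cat.true f1 f2 => simp only [MM]; exact ih _ _ h c
    case alt.false f1 f2 => simp only [MM]; exact ih _ _ h c
    case alt.true f1 f2 => simp only [MM]; exact ih _ _ h c
    case star.false f1 =>
      simp only [MM]; rw [ih _ _ h (sz f1 + 1 + c), ih _ _ h (sz f1 + 1 + 0)]; omega

lemma kontAux_append : ∀ (r1 : RPos) (f g : RE σ) (cur : RPos) (kc : RNode) (r2 : RPos),
    sub f r1 = some g →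
    kontAux f cur (r1 ++ r2) kc = kontAux g (cur ++ r1) r2 (kontAux f cur r1 kc) := by
  intro r1
  induction r1 with
  | nil =>
    intro f g cur kc r2 h
    simp [sub] at h
    subst h
    simp [kontAux]
  | cons b r1 ih =>
    intro f g cur kc r2 h
    cases f <;> cases b <;> simp [sub] at h <;> simp [kontAux] <;>
      rw [ih _ _ _ _ _ h] <;> simp

lemma kont_catL {e f1 f2 : RE σ} {p : RPos} (h : sub e p = some (cat f1 f2)) :
    kont e (p ++ [false]) = some (p ++ [true]) := by
  unfold kont
  rw [kontAux_append p e (cat f1 f2) [] none [false] h]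
  simp [kontAux]

lemma kont_catR {e f1 f2 : RE σ} {p : RPos} (h : sub e p = some (cat f1 f2)) :
    kont e (p ++ [true]) = kont e p := by
  unfold kont
  rw [kontAux_append p e (cat f1 f2) [] none [true] h]
  simp [kontAux]

lemma kont_alt {e f1 f2 : RE σ} {p : RPos} (b : Bool) (h : sub e p = some (alt f1 f2)) :
    kont e (p ++ [b]) = kont e p := by
  unfold kont
  rw [kontAux_append p e (alt f1 f2) [] none [b] h]
  cases b <;> simp [kontAux]

lemma kont_star {e f1 : RE σ} {p : RPos} (h : sub e p = some (star f1)) :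
    kont e (p ++ [false]) = some p := by
  unfold kont
  rw [kontAux_append p e (star f1) [] none [false] h]
  simp [kontAux]

lemma MM_shift : ∀ (cur : RPos) (e f : RE σ), sub e cur = some f →
    ∃ D, ∀ (s : RPos) (c : ℕ) (g : RE σ), sub f s = some g →
      MM e (cur ++ s) c = MM f s c + D := by
  intro cur
  induction cur with
  | nil =>
    intro e f h
    simp [sub] at h
    subst h
    exact ⟨0, fun s c g _ => by simp⟩
  | cons b cur ih =>
    intro e f h
    cases e <;> cases b <;> simp [sub] at h
    case cat.false f1 f2 =>
      obtain ⟨D, hD⟩ := ih f1 f h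
      refine ⟨sz f2 + D, fun s c g hg => ?_⟩
      simp [MM]
      rw [hD s (sz f2 + c) g hg, MM_lin s f g hg (sz f2 + c), MM_lin s f g hg c]
      omega
    case cat.true f1 f2 =>
      obtain ⟨D, hD⟩ := ih f2 f h
      exact ⟨D, fun s c g hg => by simp [MM]; rw [hD s c g hg]⟩
    case alt.false f1 f2 =>
      obtain ⟨D, hD⟩ := ih f1 f h
      exact ⟨D, fun s c g hg => by simp [MM]; rw [hD s c g hg]⟩
    case alt.true f1 f2 =>
      obtain ⟨D, hD⟩ := ih f2 f h
      exact ⟨D, fun s c g hg => by simp [MM]; rw [hD s c g hg]⟩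
    case star.false f1 =>
      obtain ⟨D, hD⟩ := ih f1 f h
      refine ⟨sz f1 + 1 + D, fun s c g hg => ?_⟩
      simp [MM]
      rw [hD s (sz f1 + 1 + c) g hg, MM_lin s f g hg (sz f1 + 1 + c), MM_lin s f g hg c]
      omega

lemma sz_sub : ∀ (t : RPos) (f g : RE σ), sub f t = some g → sz g + t.length ≤ sz f := by
  intro t
  induction t with
  | nil => intro f g h; simp [sub] at h; subst h; simp
  | cons b t ih =>
    intro f g h
    cases f <;> cases b <;> simp [sub] at h
    case cat.false f1 f2 => have h2 := ih _ _ h; simp [sz]; omega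
    case cat.true f1 f2 => have h2 := ih _ _ h; simp [sz]; omega
    case alt.false f1 f2 => have h2 := ih _ _ h; simp [sz]; omega
    case alt.true f1 f2 => have h2 := ih _ _ h; simp [sz]; omega
    case star.false f1 => have h2 := ih _ _ h; simp [sz]; omega

lemma lemA (e : RE σ) : ∀ (rest : RPos) (f : RE σ) (cur : RPos) (kc : RNode) (c D : ℕ) (g : RE σ),
    sub f rest = some g →
    (∀ (s : RPos) (c' : ℕ) (g' : RE σ), sub f s = some g' → MM e (cur ++ s) c' = MM f s c' + D) →
    mu e kc ≤ c + D →
    sz g + mu e (kontAux f cur rest kc) ≤ MM f rest c + D := by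
  intro rest
  induction rest with
  | nil =>
    intro f cur kc c D g hg hD hkc
    simp [sub] at hg; subst hg
    simp only [kontAux, MM]
    omega
  | cons b r ih =>
    intro f cur kc c D g hg hD hkc
    cases f <;> cases b <;> simp [sub] at hg
    case cat.false f1 f2 =>
      have hD' : ∀ (s : RPos) (c' : ℕ) (g' : RE σ), sub f1 s = some g' →
          MM e ((cur ++ [false]) ++ s) c' = MM f1 s c' + (sz f2 + D) := by
        intro s c' g' hg'
        have h1 := hD (false :: s) c' g' (by simpa [sub] using hg')
        rw [List.append_assoc, List.singleton_append, h1]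
        simp only [MM]
        rw [MM_lin s f1 g' hg' (sz f2 + c'), MM_lin s f1 g' hg' c']
        omega
      have hkc' : mu e (some (cur ++ [true])) ≤ c + (sz f2 + D) := by
        have h2 := hD [true] 0 f2 (by simp [sub])
        simp only [mu]
        rw [h2]
        simp [MM]
      have hmain := ih f1 (cur ++ [false]) (some (cur ++ [true])) c (sz f2 + D) g hg hD' hkc'
      simp only [kontAux, MM]
      rw [MM_lin r f1 g hg (sz f2 + c)]
      rw [MM_lin r f1 g hg c] at hmain
      omega
    case cat.true f1 f2 =>
      have hD' : ∀ (s : RPos) (c' : ℕ) (g' : RE σ), sub f2 s = some g' →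
          MM e ((cur ++ [true]) ++ s) c' = MM f2 s c' + D := by
        intro s c' g' hg'
        have h1 := hD (true :: s) c' g' (by simpa [sub] using hg')
        rw [List.append_assoc, List.singleton_append, h1]
        simp only [MM]
      have hmain := ih f2 (cur ++ [true]) kc c D g hg hD' hkc
      simpa only [kontAux, MM] using hmain
    case alt.false f1 f2 =>
      have hD' : ∀ (s : RPos) (c' : ℕ) (g' : RE σ), sub f1 s = some g' →
          MM e ((cur ++ [false]) ++ s) c' = MM f1 s c' + D := by
        intro s c' g' hg'
        have h1 := hD (false :: s) c' g' (by simpa [sub] using hg')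
        rw [List.append_assoc, List.singleton_append, h1]
        simp only [MM]
      have hmain := ih f1 (cur ++ [false]) kc c D g hg hD' hkc
      simpa only [kontAux, MM] using hmain
    case alt.true f1 f2 =>
      have hD' : ∀ (s : RPos) (c' : ℕ) (g' : RE σ), sub f2 s = some g' →
          MM e ((cur ++ [true]) ++ s) c' = MM f2 s c' + D := by
        intro s c' g' hg'
        have h1 := hD (true :: s) c' g' (by simpa [sub] using hg')
        rw [List.append_assoc, List.singleton_append, h1]
        simp only [MM]
      have hmain := ih f2 (cur ++ [true]) kc c D g hg hD' hkc
      simpa only [kontAux, MM] using hmain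
    case star.false f1 =>
      have hD' : ∀ (s : RPos) (c' : ℕ) (g' : RE σ), sub f1 s = some g' →
          MM e ((cur ++ [false]) ++ s) c' = MM f1 s c' + (sz f1 + 1 + D) := by
        intro s c' g' hg'
        have h1 := hD (false :: s) c' g' (by simpa [sub] using hg')
        rw [List.append_assoc, List.singleton_append, h1]
        simp only [MM]
        rw [MM_lin s f1 g' hg' (sz f1 + 1 + c'), MM_lin s f1 g' hg' c']
        omega
      have hkc' : mu e (some cur) ≤ c + (sz f1 + 1 + D) := by
        have h2 := hD [] 0 (star f1) (by simp [sub])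
        rw [List.append_nil] at h2
        simp only [mu]
        rw [h2]
        simp [MM, sz]
      have hmain := ih f1 (cur ++ [false]) (some cur) c (sz f1 + 1 + D) g hg hD' hkc'
      simp only [kontAux, MM]
      rw [MM_lin r f1 g hg (sz f1 + 1 + c)]
      rw [MM_lin r f1 g hg c] at hmain
      omega

lemma mu_kont (e : RE σ) (p : RPos) (g : RE σ) (h : sub e p = some g) :
    sz g + mu e (kont e p) ≤ mu e (some p) := by
  have hmain := lemA e p e [] none 0 0 g h (fun s c' g' _ => by simp) (by simp [mu])
  simpa [kont, mu] using hmain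

lemma mu_alt (e : RE σ) {p : RPos} {f1 f2 : RE σ} (h : sub e p = some (alt f1 f2)) (b : Bool) :
    mu e (some (p ++ [b])) < mu e (some p) := by
  obtain ⟨D, hD⟩ := MM_shift p e (alt f1 f2) h
  have h1 := hD [b] 0 (if b then f2 else f1) (by cases b <;> simp [sub])
  have h2 := hD [] 0 (alt f1 f2) (by simp [sub])
  rw [List.append_nil] at h2
  simp only [mu]
  rw [h1, h2]
  have hp1 := sz_pos f1
  have hp2 := sz_pos f2
  cases b <;> simp [MM, sz] <;> omega

lemma mu_cat (e : RE σ) {p : RPos} {f1 f2 : RE σ} (h : sub e p = some (cat f1 f2)) :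
    mu e (some (p ++ [false])) < mu e (some p) := by
  obtain ⟨D, hD⟩ := MM_shift p e (cat f1 f2) h
  have h1 := hD [false] 0 f1 (by simp [sub])
  have h2 := hD [] 0 (cat f1 f2) (by simp [sub])
  rw [List.append_nil] at h2
  simp only [mu]
  rw [h1, h2]
  simp [MM, sz]

lemma eps_step_mu {e : RE σ} {q q' : RNode} (h : EpsStep e q q') :
    mu e q' < mu e q ∨
      ∃ (p : RPos) (f1 : RE σ), q = some p ∧ sub e p = some (star f1) ∧
        q' = some (p ++ [false]) := by
  cases h with
  | altL h1 => exact Or.inl (mu_alt e h1 false)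
  | altR h1 => exact Or.inl (mu_alt e h1 true)
  | @starK p f1 w h1 =>
    left
    have hk := mu_kont e p (star f1) h1
    have hp := sz_pos f1
    simp only [sz] at hk
    omega
  | starI h1 => exact Or.inr ⟨_, _, rfl, h1, rfl⟩
  | catL h1 => exact Or.inl (mu_cat e h1)
  | @epsC p w h1 =>
    left
    have hk := mu_kont e p eps h1
    simp only [sz] at hk
    omega

lemma no_desc (h : ℕ → ℕ) (hd : ∀ n, h (n + 1) < h n) : False := by
  have key : ∀ n, h n + n ≤ h 0 := by
    intro n
    induction n with
    | zero => omega
    | succ k ihk => have := hd k; omega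
  have := key (h 0 + 1)
  omega

lemma starI_exists (e : RE σ) (g : ℕ → RNode) (hs : ∀ n, EpsStep e (g n) (g (n + 1))) :
    ∃ (n : ℕ) (p : RPos) (f1 : RE σ), g n = some p ∧ sub e p = some (star f1) ∧
      g (n + 1) = some (p ++ [false]) := by
  by_contra hc
  push_neg at hc
  apply no_desc (fun n => mu e (g n))
  intro n
  rcases eps_step_mu (hs n) with h | ⟨p, f1, h1, h2, h3⟩
  · exact h
  · exact absurd h3 (hc n p f1 h1 h2)

lemma step_eps {e : RE σ} {c c' : RConf σ} (h : PWStep e c c') (hw : c'.2 = c.2) :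
    EpsStep e c.1 c'.1 := by
  cases h with
  | altL h1 => exact PWStep.altL h1
  | altR h1 => exact PWStep.altR h1
  | starK h1 => exact PWStep.starK h1
  | starI h1 => exact PWStep.starI h1
  | catL h1 => exact PWStep.catL h1
  | @symC p a w h1 => exact absurd hw.symm (List.cons_ne_self a w)
  | epsC h1 => exact PWStep.epsC h1

lemma seq_nsteps {α : Type} {R : α → α → Prop} {g : ℕ → α} (h : ∀ n, R (g n) (g (n + 1))) :
    ∀ (m k : ℕ), NSteps R m (g k) (g (k + m)) := by
  intro m
  induction m with
  | zero => intro k; exact rfl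
  | succ m ih =>
    intro k
    refine ⟨g (k + 1), h k, ?_⟩
    have h2 := ih (k + 1)
    rwa [show k + 1 + m = k + (m + 1) by omega] at h2

lemma L1 (e : RE σ) (hnn : NonNullableStars e) :
    ∀ (n : ℕ) (p : RPos) (f : RE σ) (q : RNode), sub e p = some f →
      NSteps (EpsStep e) n (some p) q → (∀ s, q ≠ some (p ++ s)) →
      [] ∈ lang f ∧ ∃ k, k < n ∧ NSteps (EpsStep e) k (kont e p) q := by
  intro n
  induction n using Nat.strong_induction_on with
  | _ n ih =>
    intro p f q hf hst hq
    cases n with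
    | zero =>
      simp only [NSteps] at hst
      exact absurd hst.symm (by simpa using hq [])
    | succ m =>
      obtain ⟨c, h1, h2⟩ := hst
      cases h1 with
      | @altL p' f1 f2 w h =>
        rw [hf] at h; injection h with h; subst h
        have hsub1 : sub e (p ++ [false]) = some f1 := by
          rw [sub_append p e _ hf]; simp [sub]
        have hq1 : ∀ s, q ≠ some ((p ++ [false]) ++ s) := fun s => by
          rw [List.append_assoc]; exact hq _
        obtain ⟨hl, k, hk, hks⟩ := ih m (Nat.lt_succ_self m) (p ++ [false]) f1 q hsub1 h2 hq1
        rw [kont_alt false hf] at hks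
        refine ⟨?_, k, by omega, hks⟩
        simp only [lang]
        exact (Language.mem_add _ _ _).mpr (Or.inl hl)
      | @altR p' f1 f2 w h =>
        rw [hf] at h; injection h with h; subst h
        have hsub1 : sub e (p ++ [true]) = some f2 := by
          rw [sub_append p e _ hf]; simp [sub]
        have hq1 : ∀ s, q ≠ some ((p ++ [true]) ++ s) := fun s => by
          rw [List.append_assoc]; exact hq _
        obtain ⟨hl, k, hk, hks⟩ := ih m (Nat.lt_succ_self m) (p ++ [true]) f2 q hsub1 h2 hq1
        rw [kont_alt true hf] at hks
        refine ⟨?_, k, by omega, hks⟩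
        simp only [lang]
        exact (Language.mem_add _ _ _).mpr (Or.inr hl)
      | @starK p' f1 w h =>
        rw [hf] at h; injection h with h; subst h
        refine ⟨?_, m, Nat.lt_succ_self m, h2⟩
        simp only [lang]
        exact Language.nil_mem_kstar _
      | @starI p' f1 w h =>
        rw [hf] at h; injection h with h; subst h
        have hsub1 : sub e (p ++ [false]) = some f1 := by
          rw [sub_append p e _ hf]; simp [sub]
        have hq1 : ∀ s, q ≠ some ((p ++ [false]) ++ s) := fun s => by
          rw [List.append_assoc]; exact hq _
        obtain ⟨hl, -⟩ := ih m (Nat.lt_succ_self m) (p ++ [false]) f1 q hsub1 h2 hq1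
        exact absurd hl (hnn p f1 hf)
      | @catL p' f1 f2 w h =>
        rw [hf] at h; injection h with h; subst h
        have hsub1 : sub e (p ++ [false]) = some f1 := by
          rw [sub_append p e _ hf]; simp [sub]
        have hq1 : ∀ s, q ≠ some ((p ++ [false]) ++ s) := fun s => by
          rw [List.append_assoc]; exact hq _
        obtain ⟨hl1, k1, hk1, hks1⟩ := ih m (Nat.lt_succ_self m) (p ++ [false]) f1 q hsub1 h2 hq1
        rw [kont_catL hf] at hks1
        have hsub2 : sub e (p ++ [true]) = some f2 := by
          rw [sub_append p e _ hf]; simp [sub]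
        have hq2 : ∀ s, q ≠ some ((p ++ [true]) ++ s) := fun s => by
          rw [List.append_assoc]; exact hq _
        obtain ⟨hl2, k2, hk2, hks2⟩ := ih k1 (by omega) (p ++ [true]) f2 q hsub2 hks1 hq2
        rw [kont_catR hf] at hks2
        refine ⟨?_, k2, by omega, hks2⟩
        simp only [lang]
        simpa using Language.append_mem_mul hl1 hl2
      | @epsC p' w h =>
        rw [hf] at h; injection h with h; subst h
        refine ⟨?_, m, Nat.lt_succ_self m, h2⟩
        simp [lang, Language.mem_one]

lemma claimB (e : RE σ) (hnn : NonNullableStars e) :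
    ∀ (N : ℕ) (f : RE σ) (p : RPos), sz f ≤ N → sub e p = some f →
      ∀ g : ℕ → RNode, (∀ n, EpsStep e (g n) (g (n + 1))) →
        (∀ n, ∃ s, g n = some (p ++ s)) → False := by
  intro N
  induction N with
  | zero =>
    intro f p hszf _ _ _ _
    have := sz_pos f
    omega
  | succ N ih =>
    intro f p hszf hf g hg hin
    obtain ⟨n, p', f1, hgn, hsub', hgn1⟩ := starI_exists e g hg
    obtain ⟨s, hs⟩ := hin n
    rw [hgn] at hs
    injection hs with hs
    subst hs
    have hstar : sub f s = some (star f1) := by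
      have h1 := sub_append p e f hf s
      rw [hsub'] at h1
      exact h1.symm
    have hsubf : sub f (s ++ [false]) = some f1 := by
      rw [sub_append s f (star f1) hstar]; simp [sub]
    have hsz1 := sz_sub (s ++ [false]) f f1 hsubf
    have hsub'' : sub e ((p ++ s) ++ [false]) = some f1 := by
      rw [sub_append (p ++ s) e (star f1) hsub']; simp [sub]
    by_cases hall : ∀ m, ∃ s', g (n + 1 + m) = some (((p ++ s) ++ [false]) ++ s')
    · refine ih f1 ((p ++ s) ++ [false]) ?_ hsub'' (fun m => g (n + 1 + m))
        (fun m => hg (n + 1 + m)) hall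
      simp at hsz1
      omega
    · push_neg at hall
      obtain ⟨m, hm⟩ := hall
      have hst : NSteps (EpsStep e) m (g (n + 1)) (g (n + 1 + m)) := seq_nsteps hg m (n + 1)
      rw [hgn1] at hst
      exact hnn (p ++ s) f1 hsub'
        (L1 e hnn m ((p ++ s) ++ [false]) f1 (g (n + 1 + m)) hsub'' hst hm).1

end RE

/-- termination of ε-transition sequences: if all starred bodies
of `e` are non-nullable, then there is no infinite sequence of consecutive
non-consuming PWπ transitions; i.e. the restriction of the PWπ transition relation
to non-consuming transitions is well-founded (in the converse direction). -/
theorem eps_wf {σ : Type} (e : RE σ) (hnn : RE.NonNullableStars e) :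
    (¬ ∃ g : ℕ → RConf σ,
        ∀ n, RE.PWStep e (g n) (g (n + 1)) ∧ (g (n + 1)).2 = (g n).2) ∧
      WellFounded (fun c c' : RConf σ => RE.PWStep e c' c ∧ c.2 = c'.2) := by
  have part1 : ¬∃ g : ℕ → RConf σ,
      ∀ n, RE.PWStep e (g n) (g (n + 1)) ∧ (g (n + 1)).2 = (g n).2 := by
    rintro ⟨g, hg⟩
    have heps : ∀ n, RE.EpsStep e (g n).1 (g (n + 1)).1 := fun n =>
      RE.step_eps (hg n).1 (hg n).2
    obtain ⟨n, p, f1, hgn, hsub, hgn1⟩ := RE.starI_exists e (fun n => (g n).1) heps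
    have hsub' : RE.sub e (p ++ [false]) = some f1 := by
      rw [RE.sub_append p e _ hsub]; simp [RE.sub]
    by_cases hall : ∀ m, ∃ s, (g (n + 1 + m)).1 = some ((p ++ [false]) ++ s)
    · exact RE.claimB e hnn (RE.sz f1) f1 (p ++ [false]) le_rfl hsub'
        (fun m => (g (n + 1 + m)).1) (fun m => heps (n + 1 + m)) hall
    · push_neg at hall
      obtain ⟨m, hm⟩ := hall
      have hst : NSteps (RE.EpsStep e) m (g (n + 1)).1 (g (n + 1 + m)).1 :=
        RE.seq_nsteps (g := fun n => (g n).1) heps m (n + 1)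
      rw [hgn1] at hst
      exact hnn p f1 hsub
        (RE.L1 e hnn m (p ++ [false]) f1 (g (n + 1 + m)).1 hsub' hst hm).1
  refine ⟨part1, ?_⟩
  set R : RConf σ → RConf σ → Prop := fun c c' => RE.PWStep e c' c ∧ c.2 = c'.2 with hR
  constructor
  intro a
  by_contra hacc
  have step : ∀ x : RConf σ, ¬Acc R x → ∃ y, R y x ∧ ¬Acc R y := by
    intro x hx
    by_contra h
    push_neg at h
    exact hx (Acc.intro x fun y hy => h y hy)
  choose nxt hr hna using step
  have hf : ∃ f : ℕ → {x : RConf σ // ¬Acc R x}, f 0 = ⟨a, hacc⟩ ∧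
      ∀ n, f (n + 1) = ⟨nxt (f n).1 (f n).2, hna (f n).1 (f n).2⟩ :=
    ⟨fun n => Nat.rec ⟨a, hacc⟩ (fun _ p => ⟨nxt p.1 p.2, hna p.1 p.2⟩) n, rfl, fun n => rfl⟩
  obtain ⟨f, -, hfs⟩ := hf
  apply part1
  refine ⟨fun n => (f n).1, fun n => ?_⟩
  have h2 := hr (f n).1 (f n).2
  show RE.PWStep e (f n).1 (f (n + 1)).1 ∧ ((f (n + 1)).1).2 = ((f n).1).2
  rw [hfs n]
  exact ⟨h2.1, h2.2⟩
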